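/- Fix y with 0 ≤ y < 1 and s > 0. Then inf{ u ∈ ℝ : ∫_u^∞ h((x−y)/s) dx ≥ max(1−u, 0) } equals 1 if s ≤ 1−y, and equals L_y^+(s) = y − s + 2√(s(1−y)) if s ≥ 1−y. (Explicit formula for the right edge Λ_y^+(s) in the proof of Theorem 4.3) -/

import Mathlib

open MeasureTheory

/-- The Rost hydrodynamic density profile `h(x) = min(1, max((1-x)/2, 0))`. -/
noncomputable def hRost (x : ℝ) : ℝ := min 1 (max ((1 - x) / 2) 0)

/-- `L_y^-(s) = y + s - 2√(sy)`. -/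
noncomputable def Lminus (y s : ℝ) : ℝ := y + s - 2 * Real.sqrt (s * y)

/-- `L_y^+(s) = y - s + 2√(s(1-y))`. -/
noncomputable def Lplus (y s : ℝ) : ℝ := y - s + 2 * Real.sqrt (s * (1 - y))

/-- `γ_y = 1 + 2√(y(1-y))`. -/
noncomputable def gamma' (y : ℝ) : ℝ := 1 + 2 * Real.sqrt (y * (1 - y))


open Set

lemma hRost_nonneg (t : ℝ) : 0 ≤ hRost t :=
  le_min one_pos.le (le_max_right _ _)

lemma hRost_of_one_le {t : ℝ} (h : 1 ≤ t) : hRost t = 0 := by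
  unfold hRost
  rw [max_eq_right (by linarith), min_eq_right (by norm_num)]

lemma hRost_of_mem {t : ℝ} (h1 : -1 ≤ t) (h2 : t ≤ 1) : hRost t = (1 - t) / 2 := by
  unfold hRost
  rw [max_eq_left (by linarith), min_eq_right (by linarith)]

lemma hRost_of_le_neg_one {t : ℝ} (h : t ≤ -1) : hRost t = 1 := by
  unfold hRost
  rw [max_eq_left (by linarith), min_eq_left (by linarith)]

lemma hRost_continuous : Continuous hRost :=
  continuous_const.min (((continuous_const.sub continuous_id).div_const 2).max continuous_const)

section

variable {y s : ℝ}

lemma f_cont (hs : 0 < s) : Continuous fun x : ℝ => hRost ((x - y) / s) :=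
  hRost_continuous.comp ((continuous_id.sub continuous_const).div_const s)

lemma int_zero (hs : 0 < s) {u : ℝ} (h : y + s ≤ u) :
    ∫ x in Ioi u, hRost ((x - y) / s) = 0 := by
  rw [setIntegral_congr_fun measurableSet_Ioi
      (g := fun _ => (0:ℝ)) (fun x hx => hRost_of_one_le (by
        rw [le_div_iff₀ hs]; simp only [mem_Ioi] at hx; linarith))]
  simp

lemma f_intOn (hs : 0 < s) (v : ℝ) :
    IntegrableOn (fun x : ℝ => hRost ((x - y) / s)) (Ioi v) := by
  have hz : IntegrableOn (fun x : ℝ => hRost ((x - y) / s)) (Ioi (max v (y + s))) := by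
    rw [integrableOn_congr_fun (g := fun _ => (0:ℝ))
      (fun x hx => hRost_of_one_le (by
        rw [le_div_iff₀ hs]; simp only [mem_Ioi] at hx
        have := le_max_right v (y + s); linarith)) measurableSet_Ioi]
    exact integrableOn_zero
  rcases le_total (y + s) v with h | h
  · rwa [max_eq_left h] at hz
  · rw [max_eq_right h] at hz
    rw [← Ioc_union_Ioi_eq_Ioi h]
    exact ((f_cont hs).integrableOn_Ioc).union hz

lemma int_mid (hs : 0 < s) {u : ℝ} (h1 : y - s ≤ u) (h2 : u ≤ y + s) :
    ∫ x in Ioi u, hRost ((x - y) / s) = (y + s - u) ^ 2 / (4 * s) := by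
  rw [← Ioc_union_Ioi_eq_Ioi h2,
    setIntegral_union (Ioc_disjoint_Ioi le_rfl) measurableSet_Ioi
      ((f_cont hs).integrableOn_Ioc) (f_intOn hs _),
    int_zero hs le_rfl, add_zero, ← intervalIntegral.integral_of_le h2,
    intervalIntegral.integral_congr (g := fun x => (y + s) / (2 * s) - x * (1 / (2 * s)))
      (fun x hx => by
        rw [uIcc_of_le h2, mem_Icc] at hx
        rw [hRost_of_mem (by rw [le_div_iff₀ hs]; linarith)
          (by rw [div_le_one hs]; linarith)]
        field_simp
        ring)]
  rw [intervalIntegral.integral_sub (intervalIntegrable_const)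
      ((continuous_mul_right (1 / (2 * s))).intervalIntegrable _ _),
    intervalIntegral.integral_const, intervalIntegral.integral_mul_const,
    integral_id]
  simp only [smul_eq_mul]
  field_simp
  ring

lemma int_left (hs : 0 < s) {u : ℝ} (h : u ≤ y - s) :
    ∫ x in Ioi u, hRost ((x - y) / s) = y - u := by
  have h2 : u ≤ y - s := h
  rw [← Ioc_union_Ioi_eq_Ioi (by linarith : u ≤ y - s),
    setIntegral_union (Ioc_disjoint_Ioi le_rfl) measurableSet_Ioi
      ((f_cont hs).integrableOn_Ioc) (f_intOn hs _),
    int_mid hs le_rfl (by linarith),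
    setIntegral_congr_fun measurableSet_Ioc (g := fun _ => (1:ℝ))
      (fun x hx => hRost_of_le_neg_one (by
        rw [mem_Ioc] at hx
        rw [div_le_iff₀ hs]; linarith))]
  simp only [integral_const, MeasurableSet.univ, Measure.restrict_apply, univ_inter,
    Real.volume_Ioc, smul_eq_mul, mul_one]
  simp only [Measure.real, Measure.restrict_apply MeasurableSet.univ, univ_inter, Real.volume_Ioc]
  rw [ENNReal.toReal_ofReal (by linarith)]
  field_simp
  ring

end

/-- Explicit formula for the right edge `Λ_y^+(s)` in the proof of Theorem 4.3:
`inf{u : ∫_u^∞ h((x-y)/s) dx ≥ max(1-u, 0)}` equals `1` if `s ≤ 1-y` and `L_y^+(s)`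
if `s ≥ 1-y`. -/
theorem right_edge_formula (y s : ℝ) (hy0 : 0 ≤ y) (hy1 : y < 1) (hs : 0 < s) :
    (s ≤ 1 - y →
      sInf {u : ℝ | max (1 - u) 0 ≤ ∫ x in Set.Ioi u, hRost ((x - y) / s)} = 1)
    ∧ (1 - y ≤ s →
      sInf {u : ℝ | max (1 - u) 0 ≤ ∫ x in Set.Ioi u, hRost ((x - y) / s)}
        = Lplus y s) := by
  have hnn : ∀ u : ℝ, 0 ≤ ∫ x in Set.Ioi u, hRost ((x - y) / s) := fun u =>
    setIntegral_nonneg measurableSet_Ioi fun x _ => hRost_nonneg _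
  constructor
  · intro hsy
    have hset : {u : ℝ | max (1 - u) 0 ≤ ∫ x in Set.Ioi u, hRost ((x - y) / s)}
        = Set.Ici (1 : ℝ) := by
      ext u
      simp only [Set.mem_setOf_eq, Set.mem_Ici]
      constructor
      · intro hu
        by_contra hlt
        push_neg at hlt
        rw [max_eq_left (by linarith)] at hu
        rcases le_or_gt (y + s) u with h | h
        · rw [int_zero hs h] at hu; linarith
        rcases le_or_gt (y - s) u with h' | h'
        · rw [int_mid hs h' h.le] at hu
          have hu' : (1 - u) * (4 * s) ≤ (y + s - u) ^ 2 :=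
            (le_div_iff₀ (by positivity)).1 hu
          nlinarith [mul_pos (show (0:ℝ) < y + s - u by linarith)
              (show (0:ℝ) < 4 * s - (y + s - u) by linarith),
            mul_nonneg hs.le (show (0:ℝ) ≤ 1 - (y + s) by linarith)]
        · rw [int_left hs h'.le] at hu; linarith
      · intro hu
        rw [max_eq_right (by linarith)]
        exact hnn u
    rw [hset, csInf_Ici]
  · intro hsy
    set r := Real.sqrt (s * (1 - y)) with hrdef
    have hr0 : 0 ≤ r := Real.sqrt_nonneg _
    have hrpos : 0 < r := Real.sqrt_pos.2 (by nlinarith)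
    have hr2 : r ^ 2 = s * (1 - y) := Real.sq_sqrt (by nlinarith)
    have hrs : r ≤ s := by
      have h := Real.sqrt_le_sqrt (show s * (1 - y) ≤ s * s by nlinarith)
      rwa [Real.sqrt_mul_self hs.le] at h
    have hra : 1 - y ≤ r := by
      have h := Real.sqrt_le_sqrt (show (1 - y) * (1 - y) ≤ s * (1 - y) by nlinarith)
      rwa [Real.sqrt_mul_self (by linarith : (0:ℝ) ≤ 1 - y)] at h
    have hL : Lplus y s = y - s + 2 * r := rfl
    have hL1 : Lplus y s ≤ 1 := by
      rw [hL]
      nlinarith [mul_nonneg (sub_nonneg.2 hrs) (sub_nonneg.2 hra)]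
    have hc1 : (1 : ℝ) ≤ y + s := by linarith
    have hset : {u : ℝ | max (1 - u) 0 ≤ ∫ x in Set.Ioi u, hRost ((x - y) / s)}
        = Set.Ici (Lplus y s) := by
      ext u
      simp only [Set.mem_setOf_eq, Set.mem_Ici]
      constructor
      · intro hu
        by_contra hlt
        push_neg at hlt
        rw [hL] at hlt
        have hu1 : u < 1 := by rw [hL] at hL1; linarith
        rw [max_eq_left (by linarith)] at hu
        rcases le_or_gt (y - s) u with h' | h'
        · rw [int_mid hs h' (by linarith)] at hu
          have hu' : (1 - u) * (4 * s) ≤ (y + s - u) ^ 2 :=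
            (le_div_iff₀ (by positivity)).1 hu
          nlinarith [mul_pos (show (0:ℝ) < (y - s + 2 * r) - u by linarith)
              (show (0:ℝ) < u - (y - s - 2 * r) by linarith)]
        · rw [int_left hs h'.le] at hu; linarith
      · intro hu
        rw [hL] at hu
        rcases le_or_gt 1 u with h1 | h1
        · rw [max_eq_right (by linarith)]
          exact hnn u
        · rw [max_eq_left (by linarith),
            int_mid hs (by linarith) (by linarith), le_div_iff₀ (by positivity)]
          nlinarith [mul_nonneg (show (0:ℝ) ≤ u - (y - s + 2 * r) by linarith)
              (show (0:ℝ) ≤ u - (y - s - 2 * r) by linarith)]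
    rw [hset, csInf_Ici]
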